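/- For all positive integers n, a(n) ≥ o(n). -/
import Mathlib


theorem stmt_10
    (i a : ℕ → ℚ)
    (ha0 : a 0 = 0) (hi1 : i 1 = 1) (ha1 : a 1 = 0)
    (ha : ∀ n : ℕ, 2 ≤ n → a n = (i (n - 1) + a (n - 1)) / 2)
    (hi23 : ∀ n : ℕ, 2 ≤ n → n ≤ 3 → i n = i (n - 1))
    (hi4 : i 4 = (i 1 + a 1 + i 2 + a 2) / 2)
    (hi5 : ∀ n : ℕ, 5 ≤ n → i n = (i 2 + a 2 + i (n - 3) + a (n - 3)) / 2)
    (o : ℕ → ℚ)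
    (ho0 : o 0 = 0) (ho1 : o 1 = 0)
    (ho : ∀ n : ℕ, 2 ≤ n → o n = (o (n - 1) + a (n - 1)) / 2) :
    ∀ n : ℕ, 1 ≤ n → a n ≥ o n := by
  have hi2 : i 2 = 1 := by rw [hi23 2 (by norm_num) (by norm_num)]; norm_num [hi1]
  have ha2 : a 2 = 1/2 := by rw [ha 2 (by norm_num)]; norm_num [hi1, ha1]
  have hi3 : i 3 = 1 := by rw [hi23 3 (by norm_num) (by norm_num)]; norm_num [hi2]
  have ha3 : a 3 = 3/4 := by rw [ha 3 (by norm_num)]; norm_num [hi2, ha2]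
  have hi4' : i 4 = 5/4 := by rw [hi4, hi1, ha1, hi2, ha2]; norm_num
  have ha4 : a 4 = 7/8 := by rw [ha 4 (by norm_num)]; norm_num [hi3, ha3]
  have hi5' : i 5 = 3/2 := by
    rw [hi5 5 (by norm_num)]; norm_num [hi2, ha2]
  have ha5 : a 5 = 17/16 := by rw [ha 5 (by norm_num)]; norm_num [hi4', ha4]
  have ho2 : o 2 = 0 := by rw [ho 2 (by norm_num)]; norm_num [ho1, ha1]
  have ho3 : o 3 = 1/4 := by rw [ho 3 (by norm_num)]; norm_num [ho2, ha2]
  have ho4 : o 4 = 1/2 := by rw [ho 4 (by norm_num)]; norm_num [ho3, ha3]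
  have ho5 : o 5 = 11/16 := by rw [ho 5 (by norm_num)]; norm_num [ho4, ha4]
  -- joint invariant at index n+1
  have key : ∀ n : ℕ, 0 ≤ o (n+1) ∧ o (n+1) ≤ a (n+1) ∧ a (n+1) ≤ i (n+1) ∧
      i (n+1) ≤ a (n+1) + 3/2 ∧
      (1 ≤ n → a n + i n ≤ a (n+1) + i (n+1) ∧ a (n+1) + i (n+1) ≤ a n + i n + 3/2) := by
    intro n
    induction n using Nat.strong_induction_on with
    | _ n IH =>
      match n with
      | 0 => refine ⟨?_, ?_, ?_, ?_, ?_⟩ <;> norm_num [ho1, ha1, hi1]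
      | 1 =>
        refine ⟨?_, ?_, ?_, ?_, fun _ => ⟨?_, ?_⟩⟩ <;>
          norm_num [ho2, ha2, hi2, ha1, hi1]
      | 2 =>
        refine ⟨?_, ?_, ?_, ?_, fun _ => ⟨?_, ?_⟩⟩ <;>
          norm_num [ho3, ha3, hi3, ha2, hi2]
      | 3 =>
        refine ⟨?_, ?_, ?_, ?_, fun _ => ⟨?_, ?_⟩⟩ <;>
          norm_num [ho4, ha4, hi4', ha3, hi3]
      | 4 =>
        refine ⟨?_, ?_, ?_, ?_, fun _ => ⟨?_, ?_⟩⟩ <;>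
          norm_num [ho5, ha5, hi5', ha4, hi4']
      | (m+5) =>
        obtain ⟨q4a, q4b, q4c, q4d, q4e⟩ := IH (m+4) (by omega)
        obtain ⟨q3a, q3b, q3c, q3d, q3e⟩ := IH (m+3) (by omega)
        obtain ⟨q2a, q2b, q2c, q2d, q2e⟩ := IH (m+2) (by omega)
        obtain ⟨s34, s34'⟩ := q3e (by omega)
        obtain ⟨s23, s23'⟩ := q2e (by omega)
        have e1 : a (m+6) = (i (m+5) + a (m+5)) / 2 := by
          have := ha (m+6) (by omega)
          simpa using this
        have e2 : i (m+6) = (i 2 + a 2 + i (m+3) + a (m+3)) / 2 := by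
          have := hi5 (m+6) (by omega)
          simpa using this
        have e3 : i (m+5) = (i 2 + a 2 + i (m+2) + a (m+2)) / 2 := by
          have := hi5 (m+5) (by omega)
          simpa using this
        have e4 : a (m+5) = (i (m+4) + a (m+4)) / 2 := by
          have := ha (m+5) (by omega)
          simpa using this
        have e5 : o (m+6) = (o (m+5) + a (m+5)) / 2 := by
          have := ho (m+6) (by omega)
          simpa using this
        rw [hi2, ha2] at e2 e3
        have hmn : m + 4 + 1 = m + 5 := by omega
        rw [hmn] at q4a q4b q4c q4d
        have hmn3 : m + 3 + 1 = m + 4 := by omega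
        rw [hmn3] at q3a q3b q3c q3d s34
        have hmn2 : m + 2 + 1 = m + 3 := by omega
        rw [hmn2] at s23 s23' q2c
        rw [hmn3] at s34'
        refine ⟨?_, ?_, ?_, ?_, fun _ => ⟨?_, ?_⟩⟩
        · rw [e5]; linarith
        · rw [e5, e1]; linarith
        · rw [e1, e2, e3, e4]; linarith
        · rw [e2, e1, e3, e4]; linarith
        · rw [show m+5+1 = m+6 from rfl, e1, e2, e3]; linarith
        · rw [show m+5+1 = m+6 from rfl, e1, e2, e3]; linarith
  intro n hn
  obtain ⟨m, rfl⟩ : ∃ m, n = m + 1 := ⟨n - 1, by omega⟩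
  exact (key m).2.1
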